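/- Let μ > −1/2 and let x ≥ y > 0. Then ∫_{x−y}^{x+y} [((x+y)²−z²)(z²−(x−y)²)]^{μ−1/2} z dz = 2^{2μ−1} √π (Γ(μ+1/2)/Γ(μ+1)) (xy)^{2μ}. -/

import Mathlib

open MeasureTheory Real Set Filter Topology

/-- Gauss hypergeometric function ₂F₁(a,b;c;s) as a power series. -/
noncomputable def hyp2F1 (a b c s : ℝ) : ℝ :=
  ∑' n : ℕ, ((∏ i ∈ Finset.range n, (a + i)) * (∏ i ∈ Finset.range n, (b + i)) /
    ((∏ i ∈ Finset.range n, (c + i)) * n.factorial)) * s ^ n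

/-- Associated Legendre function of the first kind, for -1 < t < 1. -/
noncomputable def legendreP (μ ν t : ℝ) : ℝ :=
  (1 / Real.Gamma (1 - μ)) * ((1 + t) / (1 - t)) ^ (μ / 2) *
    hyp2F1 (ν + 1) (-ν) (1 - μ) ((1 - t) / 2)

/-- The real factor of the associated Legendre function of the second kind (t > 1),
i.e. `Q^μ_ν(t)` without its phase `e^{iπμ}`. -/
noncomputable def legendreQreal (μ ν t : ℝ) : ℝ :=
  Real.sqrt Real.pi * Real.Gamma (μ + ν + 1) * (t ^ 2 - 1) ^ (μ / 2) /
    ((2 : ℝ) ^ (ν + 1) * t ^ (μ + ν + 1) * Real.Gamma (ν + 3 / 2)) *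
    hyp2F1 ((μ + ν) / 2 + 1) ((μ + ν + 1) / 2) (ν + 3 / 2) (1 / t ^ 2)

/-- Associated Legendre function of the second kind, for t > 1. -/
noncomputable def legendreQ (μ ν t : ℝ) : ℂ :=
  Complex.exp ((Real.pi * μ : ℝ) * Complex.I) * (legendreQreal μ ν t : ℝ)

/-- Macdonald's integral `R_{μ,ν}(x,y,z)` of three Bessel functions, for x, y, z > 0. -/
noncomputable def Rmn (μ ν x y z : ℝ) : ℝ :=
  if z < |x - y| then 0
  else if z < x + y then
    (x * y) ^ (μ - 1) *
      Real.sqrt (1 - ((x ^ 2 + y ^ 2 - z ^ 2) / (2 * x * y)) ^ 2) ^ (μ - 1 / 2) *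
      legendreP (1 / 2 - μ) (ν - 1 / 2) ((x ^ 2 + y ^ 2 - z ^ 2) / (2 * x * y)) /
      (Real.sqrt (2 * Real.pi) * z ^ μ)
  else
    Real.sin ((ν - μ) * Real.pi) * (x * y) ^ (μ - 1) *
      Real.sqrt (((z ^ 2 - x ^ 2 - y ^ 2) / (2 * x * y)) ^ 2 - 1) ^ (μ - 1 / 2) *
      legendreQreal (1 / 2 - μ) (ν - 1 / 2) ((z ^ 2 - x ^ 2 - y ^ 2) / (2 * x * y)) /
      (Real.sqrt (Real.pi ^ 3 / 2) * z ^ μ)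

/-- Normalized Bessel function 𝒥_ν. -/
noncomputable def normBessel (ν w : ℝ) : ℝ :=
  Real.Gamma (ν + 1) *
    ∑' n : ℕ, (-1 : ℝ) ^ n * (w / 2) ^ (2 * n) / (n.factorial * Real.Gamma (ν + n + 1))

/-- Bessel function of the first kind J_ν. -/
noncomputable def besselJ (ν w : ℝ) : ℝ :=
  (w / 2) ^ ν *
    ∑' n : ℕ, (-1 : ℝ) ^ n * (w / 2) ^ (2 * n) / (n.factorial * Real.Gamma (ν + n + 1))

/-- The constant m_{k,a}. -/
noncomputable def mka (k a : ℝ) : ℂ :=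
  Complex.exp ((-(Real.pi / a) : ℝ) * Complex.I) *
    ((Real.Gamma ((2 * k + a - 1) / a) /
      (a ^ ((2 : ℝ) / a) * Real.Gamma ((2 * k + a + 1) / a)) : ℝ) : ℂ)

/-- The one-dimensional (k,a)-generalized Fourier kernel B_{k,a}(λ,x). -/
noncomputable def Bka (k a lam x : ℝ) : ℂ :=
  ((normBessel ((2 * k - 1) / a) ((2 / a) * |lam * x| ^ (a / 2)) : ℝ) : ℂ) +
    mka k a * ((lam * x : ℝ) : ℂ) *
      ((normBessel ((2 * k + 1) / a) ((2 / a) * |lam * x| ^ (a / 2)) : ℝ) : ℂ)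

/-- The kernel Δ_{k,a}(x,y,z) of the product formula. -/
noncomputable def DeltaKA (k a x y z : ℝ) : ℂ :=
  ((a * (2 : ℝ) ^ ((2 * k - 1) / a - 2) * Real.Gamma ((2 * k - 1) / a + 1) *
      |x * y * z| ^ ((1 : ℝ) / 2 - k) : ℝ) : ℂ) *
  (((Rmn ((2 * k - 1) / a) ((2 * k - 1) / a) (|x| ^ (a / 2)) (|y| ^ (a / 2)) (|z| ^ (a / 2)) : ℝ) : ℂ) +
    Complex.exp ((-(2 * Real.pi / a) : ℝ) * Complex.I) * ((Real.sign (x * y) : ℝ) : ℂ) *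
      ((Rmn ((2 * k - 1) / a) ((2 * k + 1) / a) (|x| ^ (a / 2)) (|y| ^ (a / 2)) (|z| ^ (a / 2)) : ℝ) : ℂ) +
    ((Real.sign (x * z) : ℝ) : ℂ) *
      ((Rmn ((2 * k - 1) / a) ((2 * k + 1) / a) (|x| ^ (a / 2)) (|z| ^ (a / 2)) (|y| ^ (a / 2)) : ℝ) : ℂ) +
    ((Real.sign (y * z) : ℝ) : ℂ) *
      ((Rmn ((2 * k - 1) / a) ((2 * k + 1) / a) (|y| ^ (a / 2)) (|z| ^ (a / 2)) (|x| ^ (a / 2)) : ℝ) : ℂ))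

/-- The weighted measure |x|^{2k+a-2} dx on ℝ. -/
noncomputable def wMeasure (k a : ℝ) : Measure ℝ :=
  volume.withDensity fun x => ENNReal.ofReal (|x| ^ (2 * k + a - 2))

/-- Gegenbauer polynomial C_n^μ. -/
noncomputable def gegenbauer (μ : ℝ) (n : ℕ) (x : ℝ) : ℝ :=
  ∑ j ∈ Finset.range (n / 2 + 1),
    (-1 : ℝ) ^ j * Real.Gamma ((n : ℝ) - j + μ) /
      (Real.Gamma μ * j.factorial * (n - 2 * j).factorial) * (2 * x) ^ (n - 2 * j)
/-- The beta-type integral ∫ [((x+y)²-z²)(z²-(x-y)²)]^{μ-1/2} z dz. -/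
lemma beta_real (p : ℝ) (hp : -(1:ℝ) < p) :
    ∫ t in Set.Ioo (0:ℝ) 1, t ^ p * (1 - t) ^ p =
      Real.Gamma (p+1) ^ 2 / Real.Gamma (2*p+2) := by
  have hre : 0 < Complex.re (((p:ℂ))+1) := by simp; linarith
  have h := Complex.Gamma_mul_Gamma_eq_betaIntegral hre hre
  have hb : Complex.betaIntegral ((p:ℂ)+1) ((p:ℂ)+1) =
      ((∫ t in Set.Ioo (0:ℝ) 1, t ^ p * (1-t) ^ p : ℝ) : ℂ) := by
    rw [Complex.betaIntegral, intervalIntegral.integral_of_le zero_le_one,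
      MeasureTheory.integral_Ioc_eq_integral_Ioo]
    have key : ∀ t ∈ Set.Ioo (0:ℝ) 1, (t:ℂ) ^ ((p:ℂ)+1-1) * (1 - (t:ℂ)) ^ ((p:ℂ)+1-1)
        = ((t ^ p * (1-t) ^ p : ℝ) : ℂ) := by
      intro t ht
      have h1 : ((p:ℂ)+1-1) = ((p:ℝ):ℂ) := by push_cast; ring
      rw [h1, Complex.ofReal_mul, Complex.ofReal_cpow ht.1.le,
        Complex.ofReal_cpow (by linarith [ht.2] : (0:ℝ) ≤ 1 - t), Complex.ofReal_sub,
        Complex.ofReal_one]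
    rw [setIntegral_congr_fun measurableSet_Ioo key]
    exact integral_ofReal
  rw [hb] at h
  have h2 : ((p:ℂ)+1) = ((p+1:ℝ):ℂ) := by push_cast; ring
  rw [h2] at h
  have h3 : (((p+1:ℝ):ℂ)+((p+1:ℝ):ℂ)) = ((2*p+2:ℝ):ℂ) := by push_cast; ring
  rw [h3, Complex.Gamma_ofReal, Complex.Gamma_ofReal, ← Complex.ofReal_mul,
    ← Complex.ofReal_mul] at h
  have h4 := Complex.ofReal_injective h
  have hG : 0 < Real.Gamma (2*p+2) := Real.Gamma_pos_of_pos (by linarith)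
  field_simp
  rw [sq]
  rw [show (p+1)*2 = 2*p+2 by ring, eq_div_iff hG.ne']
  linarith [h4]

set_option maxHeartbeats 1000000 in
theorem statement19 (μ : ℝ) (hμ : -(1 / 2) < μ) (x y : ℝ) (hy : 0 < y) (hxy : y ≤ x) :
    ∫ z in Set.Ioo (x - y) (x + y),
        (((x + y) ^ 2 - z ^ 2) * (z ^ 2 - (x - y) ^ 2)) ^ (μ - 1 / 2) * z =
      (2 : ℝ) ^ (2 * μ - 1) * Real.sqrt Real.pi *
        (Real.Gamma (μ + 1 / 2) / Real.Gamma (μ + 1)) * (x * y) ^ (2 * μ) := by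
  have hx : 0 < x := lt_of_lt_of_le hy hxy
  set p : ℝ := μ - 1/2 with hpdef
  have hp : -(1:ℝ) < p := by simp [hpdef]; linarith
  set a : ℝ := x - y with hadef
  set b : ℝ := x + y with hbdef
  have ha : 0 ≤ a := by simp [hadef]; linarith
  have hb : 0 < b := by simp [hbdef]; linarith
  have hab : a < b := by simp [hadef, hbdef]; linarith
  -- step 1: z ↦ z² change of variables
  have himg : (fun z : ℝ => z ^ 2) '' Set.Ioo a b = Set.Ioo (a ^ 2) (b ^ 2) := by
    ext u
    constructor
    · rintro ⟨z, hz, rfl⟩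
      simp only [Set.mem_Ioo]
      exact ⟨by nlinarith [hz.1, hz.2], by nlinarith [hz.1, hz.2]⟩
    · rintro ⟨h1, h2⟩
      have hu : 0 ≤ u := le_trans (sq_nonneg a) h1.le
      refine ⟨Real.sqrt u, ⟨?_, ?_⟩, Real.sq_sqrt hu⟩
      · calc a = Real.sqrt (a ^ 2) := by rw [Real.sqrt_sq ha]
          _ < Real.sqrt u := Real.sqrt_lt_sqrt (sq_nonneg a) h1
      · calc Real.sqrt u < Real.sqrt (b ^ 2) := Real.sqrt_lt_sqrt hu h2
          _ = b := Real.sqrt_sq hb.le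
  have hinj : Set.InjOn (fun z : ℝ => z ^ 2) (Set.Ioo a b) :=
    ((pow_left_strictMonoOn₀ two_ne_zero).injOn (α := ℝ)).mono
      (fun z hz => le_trans ha hz.1.le)
  have hcv : ∫ u in Set.Ioo (a ^ 2) (b ^ 2), ((b ^ 2 - u) * (u - a ^ 2)) ^ p
      = ∫ z in Set.Ioo a b, |2 * z| • (((b ^ 2 - z ^ 2) * (z ^ 2 - a ^ 2)) ^ p) := by
    rw [← himg]
    exact integral_image_eq_integral_abs_deriv_smul measurableSet_Ioo
      (fun z _ => by simpa using (hasDerivAt_pow 2 z).hasDerivWithinAt) hinj _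
  have hlhs : ∫ z in Set.Ioo a b, ((b ^ 2 - z ^ 2) * (z ^ 2 - a ^ 2)) ^ p * z
      = (1/2) * ∫ u in Set.Ioo (a ^ 2) (b ^ 2), ((b ^ 2 - u) * (u - a ^ 2)) ^ p := by
    rw [hcv, ← MeasureTheory.integral_const_mul]
    refine setIntegral_congr_fun measurableSet_Ioo (fun z hz => ?_)
    have hz0 : 0 < z := lt_of_le_of_lt ha hz.1
    rw [abs_of_pos (by linarith : (0:ℝ) < 2 * z)]
    simp only [smul_eq_mul]
    ring
  -- step 2: affine change of variables
  set c : ℝ := b ^ 2 - a ^ 2 with hcdef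
  have hc : 0 < c := by nlinarith
  have himg2 : (fun t : ℝ => a ^ 2 + c * t) '' Set.Ioo 0 1 = Set.Ioo (a ^ 2) (b ^ 2) := by
    ext u
    constructor
    · rintro ⟨t, ht, rfl⟩
      simp only [Set.mem_Ioo]
      constructor
      · nlinarith [ht.1]
      · nlinarith [ht.2]
    · rintro ⟨h1, h2⟩
      exact ⟨(u - a ^ 2) / c, ⟨div_pos (by linarith) hc, by rw [div_lt_one hc]; nlinarith⟩,
        by field_simp; ring⟩
  have hinj2 : Set.InjOn (fun t : ℝ => a ^ 2 + c * t) (Set.Ioo 0 1) := by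
    intro s _ t _ h
    simp only at h
    have := hc.ne'
    nlinarith
  have hcv2 : ∫ u in Set.Ioo (a ^ 2) (b ^ 2), ((b ^ 2 - u) * (u - a ^ 2)) ^ p
      = c ^ (2 * p) * c * ∫ t in Set.Ioo (0:ℝ) 1, t ^ p * (1 - t) ^ p := by
    have hder : ∀ t : ℝ, HasDerivAt (fun t => a ^ 2 + c * t) c t := fun t => by
      simpa using ((hasDerivAt_id t).const_mul c).const_add (a ^ 2)
    rw [← himg2, integral_image_eq_integral_abs_deriv_smul measurableSet_Ioo
      (fun t _ => (hder t).hasDerivWithinAt) hinj2, ← MeasureTheory.integral_const_mul]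
    refine setIntegral_congr_fun measurableSet_Ioo (fun t ht => ?_)
    have h1 : b ^ 2 - (a ^ 2 + c * t) = c * (1 - t) := by rw [hcdef]; ring
    have h2 : a ^ 2 + c * t - a ^ 2 = c * t := by ring
    rw [h1, h2, abs_of_pos hc]
    have ht1 : 0 ≤ 1 - t := by linarith [ht.2]
    rw [show c * (1 - t) * (c * t) = (c ^ 2) * (t * (1 - t)) by ring,
      Real.mul_rpow (sq_nonneg c) (by nlinarith [ht.1] : (0:ℝ) ≤ t * (1 - t)),
      Real.mul_rpow ht.1.le ht1,
      show (c:ℝ) ^ 2 = c ^ (2:ℝ) by rw [← Real.rpow_natCast c 2]; norm_num,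
      ← Real.rpow_mul hc.le]
    simp only [smul_eq_mul]
    ring
  -- assemble
  rw [show Set.Ioo (x - y) (x + y) = Set.Ioo a b from rfl]
  have hmain : ∫ z in Set.Ioo a b, ((b ^ 2 - z ^ 2) * (z ^ 2 - a ^ 2)) ^ p * z
      = (1/2) * (c ^ (2 * p) * c * (Real.Gamma (p+1) ^ 2 / Real.Gamma (2*p+2))) := by
    rw [hlhs, hcv2, beta_real p hp]
  have hinteq : ∀ z, (((x + y) ^ 2 - z ^ 2) * (z ^ 2 - (x - y) ^ 2)) ^ (μ - 1/2) * z
      = ((b ^ 2 - z ^ 2) * (z ^ 2 - a ^ 2)) ^ p * z := fun z => rfl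
  rw [show (1:ℝ)/2 = 1/2 from rfl]
  calc ∫ z in Set.Ioo a b, (((x + y) ^ 2 - z ^ 2) * (z ^ 2 - (x - y) ^ 2)) ^ (μ - 1 / 2) * z
      = (1/2) * (c ^ (2 * p) * c * (Real.Gamma (p+1) ^ 2 / Real.Gamma (2*p+2))) := hmain
    _ = (2 : ℝ) ^ (2 * μ - 1) * Real.sqrt Real.pi *
        (Real.Gamma (μ + 1 / 2) / Real.Gamma (μ + 1)) * (x * y) ^ (2 * μ) := by
      have hdup := Real.Gamma_mul_Gamma_add_half (μ + 1/2)
      rw [show μ + 1/2 + 1/2 = μ + 1 by ring, show 2 * (μ + 1/2) = 2*μ + 1 by ring] at hdup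
      have hG1 : 0 < Real.Gamma (μ + 1/2) := Real.Gamma_pos_of_pos (by linarith)
      have hG2 : 0 < Real.Gamma (μ + 1) := Real.Gamma_pos_of_pos (by linarith)
      have hG3 : 0 < Real.Gamma (2*μ + 1) := Real.Gamma_pos_of_pos (by linarith)
      have hsp : 0 < Real.sqrt Real.pi := Real.sqrt_pos.mpr Real.pi_pos
      have hcval : c = 4 * (x * y) := by rw [hcdef, hbdef, hadef]; ring
      have hxy0 : 0 < x * y := by positivity
      have h2p : (2:ℝ) * p = 2 * μ - 1 := by rw [hpdef]; ring
      have hp1 : p + 1 = μ + 1/2 := by rw [hpdef]; ring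
      have hp2 : 2*p + 2 = 2*μ + 1 := by rw [hpdef]; ring
      rw [hp1, hp2, h2p, hcval]
      have hc4 : (4 * (x * y)) ^ (2*μ - 1) = 4 ^ (2*μ-1) * (x*y) ^ (2*μ-1) :=
        Real.mul_rpow (by norm_num) hxy0.le
      have hfour : (4:ℝ) ^ (2*μ-1) = 2 ^ (2*μ-1) * 2 ^ (2*μ-1) := by
        rw [← Real.mul_rpow (by norm_num) (by norm_num)]; norm_num
      have hE : (2:ℝ) ^ (2*μ-1) * 2 = 2 ^ (2*μ) := by
        have h := Real.rpow_add two_pos (2*μ-1) 1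
        rw [Real.rpow_one] at h
        rw [← h]; norm_num

      have hE2 : (x*y:ℝ) ^ (2*μ-1) * (x*y) = (x*y) ^ (2*μ) := by
        nth_rewrite 2 [← Real.rpow_one (x*y)]
        rw [← Real.rpow_add hxy0]; norm_num
      have hEpos : (0:ℝ) < 2 ^ (2*μ) := Real.rpow_pos_of_pos two_pos _
      have hApos : (0:ℝ) < 2 ^ (2*μ-1) := Real.rpow_pos_of_pos two_pos _
      have hdup2 : Real.sqrt Real.pi * Real.Gamma (2*μ+1) =
          2 ^ (2*μ) * (Real.Gamma (μ+1/2) * Real.Gamma (μ+1)) := by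
        rw [hdup, show (1:ℝ) - (2*μ+1) = -(2*μ) by ring, Real.rpow_neg two_pos.le]
        field_simp
      set s := Real.sqrt Real.pi with hsd
      set G1 := Real.Gamma (μ + 1/2) with hG1d
      set G2 := Real.Gamma (μ + 1) with hG2d
      set G3 := Real.Gamma (2*μ + 1) with hG3d
      set A := (2:ℝ) ^ (2*μ-1) with hAd
      set E := (2:ℝ) ^ (2*μ) with hEd
      set X1 := (x*y) ^ (2*μ-1) with hX1d
      set X := (x*y) ^ (2*μ) with hXd
      have hG3eq : G3 = E * (G1 * G2) / s := by
        rw [eq_div_iff hsp.ne']; linarith [hdup2]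
      rw [hc4, hfour, hG3eq, ← hE, ← hE2]
      field_simp
      ring
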